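/- Let M be an n × n real matrix, let k < n, and let H = span(Me_{k+1}, …, Me_n), where e_1, …, e_n is the standard basis of ℝⁿ. Then the smallest singular value of M satisfies s_n(M) ≤ min_{j=1,…,k} ‖P_{H^⊥} M e_j‖₂, where P_{H^⊥} denotes the orthogonal projection of ℝⁿ onto the orthogonal complement of H. -/

import Mathlib

open Matrix

/-- The smallest singular value of an `n × n` real matrix, i.e.
`√λ_min(MMᵀ) = min_{‖x‖₂ = 1} ‖Mᵀ x‖₂`. -/
noncomputable def sMin {n N : ℕ} (A : Matrix (Fin n) (Fin N) ℝ) : ℝ :=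
  ⨅ x : {x : EuclideanSpace ℝ (Fin n) // ‖x‖ = 1},
    ‖Matrix.toEuclideanLin Aᵀ (x : EuclideanSpace ℝ (Fin n))‖

lemma key_inf_le {E : Type*} [NormedAddCommGroup E] [InnerProductSpace ℝ E]
    [FiniteDimensional ℝ E] (B : E →ₗ[ℝ] E) (v : E) (hv : 1 ≤ ‖v‖) :
    ⨅ x : {x : E // ‖x‖ = 1}, ‖LinearMap.adjoint B x‖ ≤ ‖B v‖ := by
  have hv0 : v ≠ 0 := by
    intro h; rw [h, norm_zero] at hv; linarith
  have hbdd : BddBelow (Set.range fun x : {x : E // ‖x‖ = 1} => ‖LinearMap.adjoint B x‖) := by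
    exact ⟨0, by rintro r ⟨x, rfl⟩; exact norm_nonneg _⟩
  by_cases hinj : Function.Injective (LinearMap.adjoint B)
  · -- adjoint B surjective
    obtain ⟨y, hy⟩ := (LinearMap.injective_iff_surjective.mp hinj) v
    have hy0 : y ≠ 0 := by
      intro h; rw [h, map_zero] at hy; exact hv0 hy.symm
    have hyn : (0:ℝ) < ‖y‖ := norm_pos_iff.mpr hy0
    have hx : ‖(‖y‖⁻¹ • y : E)‖ = 1 := by
      rw [norm_smul, norm_inv, norm_norm, inv_mul_cancel₀ (ne_of_gt hyn)]
    have hle := ciInf_le hbdd (⟨‖y‖⁻¹ • y, hx⟩ : {x : E // ‖x‖ = 1})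
    refine hle.trans ?_
    have hval : ‖LinearMap.adjoint B (‖y‖⁻¹ • y)‖ = ‖y‖⁻¹ * ‖v‖ := by
      rw [LinearMap.map_smul, hy, norm_smul, norm_inv, norm_norm]
    rw [hval]
    have hcs : ‖v‖ ^ 2 ≤ ‖y‖ * ‖B v‖ := by
      have h1 : (inner ℝ v v : ℝ) = inner ℝ y (B v) := by
        rw [← hy, LinearMap.adjoint_inner_left]
      have h2 := real_inner_le_norm y (B v)
      rw [real_inner_self_eq_norm_sq] at h1
      linarith [h1, h2]
    have hBv : (0:ℝ) ≤ ‖B v‖ := norm_nonneg _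
    rw [inv_mul_le_iff₀ hyn]
    nlinarith
  · -- adjoint B has nontrivial kernel
    rw [← LinearMap.ker_eq_bot] at hinj
    obtain ⟨x, hxmem, hx0⟩ := (Submodule.ne_bot_iff _).mp hinj
    have hxn : (0:ℝ) < ‖x‖ := norm_pos_iff.mpr hx0
    have hx : ‖(‖x‖⁻¹ • x : E)‖ = 1 := by
      rw [norm_smul, norm_inv, norm_norm, inv_mul_cancel₀ (ne_of_gt hxn)]
    have hle := ciInf_le hbdd (⟨‖x‖⁻¹ • x, hx⟩ : {x : E // ‖x‖ = 1})
    refine hle.trans ?_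
    have : LinearMap.adjoint B (‖x‖⁻¹ • x) = 0 := by
      rw [LinearMap.map_smul, LinearMap.mem_ker.mp hxmem, smul_zero]
    rw [this, norm_zero]
    exact norm_nonneg _

/-- **Lemma 4.1.** Let `M` be an `n × n` real matrix and `k < n`.  Let
`H = span(M e_{k+1}, …, M e_n)` (in 0-indexed terms, the columns `M e_i` with `k ≤ i`).
Then the smallest singular value of `M` satisfies
`s_n(M) ≤ ‖P_{H^⊥} M e_j‖₂` for every `j ∈ {1, …, k}` (0-indexed: `j < k`). -/
theorem smallest_singular_value_le_proj
    {n k : ℕ} (hk : k < n) (M : Matrix (Fin n) (Fin n) ℝ) :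
    ∀ j : Fin n, (j : ℕ) < k →
      sMin M ≤
        ‖(Submodule.orthogonalProjectionOnto
            (Submodule.span ℝ {v : EuclideanSpace ℝ (Fin n) |
                ∃ i : Fin n, k ≤ (i : ℕ) ∧
                  v = Matrix.toEuclideanLin M (EuclideanSpace.single i 1)})ᗮ)
          (Matrix.toEuclideanLin M (EuclideanSpace.single j 1))‖ := by
  intro j hj
  set E := EuclideanSpace ℝ (Fin n)
  set A := Matrix.toEuclideanLin M with hA
  set ej : E := EuclideanSpace.single j 1 with hej
  set S : Set E := {v : E | ∃ i : Fin n, k ≤ (i : ℕ) ∧ v = A (EuclideanSpace.single i 1)} with hS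
  set H : Submodule ℝ E := Submodule.span ℝ S with hH
  -- H = map A U
  set T : Set E := {u : E | ∃ i : Fin n, k ≤ (i : ℕ) ∧ u = EuclideanSpace.single i 1} with hT
  set U : Submodule ℝ E := Submodule.span ℝ T with hU
  have hmap : H = Submodule.map A U := by
    rw [hH, hU, Submodule.map_span]
    congr 1
    ext v
    constructor
    · rintro ⟨i, hi, rfl⟩
      exact ⟨EuclideanSpace.single i 1, ⟨i, hi, rfl⟩, rfl⟩
    · rintro ⟨u, ⟨i, hi, rfl⟩, rfl⟩
      exact ⟨i, hi, rfl⟩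
  -- decompose A ej
  have hdecomp := Submodule.starProjection_add_starProjection_orthogonal (K := H) (A ej)
  obtain ⟨u, huU, hu⟩ : ∃ u ∈ U, A u = ((Submodule.orthogonalProjectionOnto H (A ej) : E)) := by
    have hmem : ((Submodule.orthogonalProjectionOnto H (A ej) : E)) ∈ Submodule.map A U := by
      rw [← hmap]; exact (Submodule.orthogonalProjectionOnto H (A ej)).2
    exact Submodule.mem_map.mp hmem
  have hw : A (ej - u) = ((Submodule.orthogonalProjectionOnto Hᗮ (A ej) : E)) := by
    rw [map_sub, hu]
    exact sub_eq_of_eq_add' hdecomp.symm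
  -- u j = 0, via inner product with ej
  have huj : (inner ℝ ej u : ℝ) = 0 := by
    refine Submodule.span_induction ?_ ?_ ?_ ?_ huU
    · rintro x ⟨i, hi, rfl⟩
      rw [hej, EuclideanSpace.inner_single_left]
      have hij : i ≠ j := fun h => absurd (h ▸ hi) (by omega)
      simp [EuclideanSpace.single_apply, hij, Ne.symm hij]
    · simp
    · intro x y _ _ hx hy; rw [inner_add_right, hx, hy, add_zero]
    · intro a x _ hx; rw [real_inner_smul_right, hx, mul_zero]
  have hnorm : 1 ≤ ‖ej - u‖ := by
    have h1 : (inner ℝ ej (ej - u) : ℝ) = 1 := by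
      rw [inner_sub_right, huj, sub_zero, hej, real_inner_self_eq_norm_sq,
        EuclideanSpace.norm_single]
      norm_num
    have h2 := real_inner_le_norm ej (ej - u)
    rw [h1, hej, EuclideanSpace.norm_single] at h2
    simpa using h2
  -- rewrite sMin as inf over adjoint
  have hsMin : sMin M = ⨅ x : {x : E // ‖x‖ = 1}, ‖LinearMap.adjoint A x‖ := by
    rw [sMin]
    congr 1
    ext x
    rw [hA, ← Matrix.toEuclideanLin_conjTranspose_eq_adjoint,
      Matrix.conjTranspose_eq_transpose_of_trivial]
  rw [hsMin]
  calc ⨅ x : {x : E // ‖x‖ = 1}, ‖LinearMap.adjoint A x‖ ≤ ‖A (ej - u)‖ :=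
        key_inf_le A (ej - u) hnorm
    _ = _ := by rw [hw]; rfl
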